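/- Let K : ℝ → ℝ be continuous with δ ≤ K(t) ≤ 1, where δ > (4+√7)/8. Suppose ℓ ∈ ℝ satisfies 4π − 2π/√δ ≤ ℓ ≤ 4π/√δ − 2π. If θ solves θ' = cos²θ + K sin²θ with θ(0) = 0, then 3π/2 < θ(ℓ) < 5π/2, and consequently cos θ(ℓ) > 0. -/

import Mathlib

open Real

set_option maxHeartbeats 1000000 in
/-- Key ODE estimate for the monotonicity of the Birkhoff return map: if
`δ > (4+√7)/8`, `K` is continuous with `δ ≤ K ≤ 1`, `ℓ` satisfies
`4π − 2π/√δ ≤ ℓ ≤ 4π/√δ − 2π`, and `θ` solves `θ' = cos²θ + K sin²θ` with `θ(0) = 0`,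
then `3π/2 < θ(ℓ) < 5π/2`, and consequently `cos θ(ℓ) > 0`. -/
theorem twist_ode_pinched (K θ : ℝ → ℝ) (δ ℓ : ℝ)
    (hδ : (4 + Real.sqrt 7) / 8 < δ)
    (hK : Continuous K) (hKl : ∀ t, δ ≤ K t) (hKu : ∀ t, K t ≤ 1)
    (hℓ1 : 4 * π - 2 * π / Real.sqrt δ ≤ ℓ)
    (hℓ2 : ℓ ≤ 4 * π / Real.sqrt δ - 2 * π)
    (hθ0 : θ 0 = 0)
    (hθ : ∀ t, HasDerivAt θ (Real.cos (θ t) ^ 2 + K t * Real.sin (θ t) ^ 2) t) :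
    3 * π / 2 < θ ℓ ∧ θ ℓ < 5 * π / 2 ∧ 0 < Real.cos (θ ℓ) := by
  have h7 : Real.sqrt 7 < 27/10 := by
    rw [show (27/10 : ℝ) = Real.sqrt ((27/10)^2) from (Real.sqrt_sq (by norm_num)).symm]
    exact Real.sqrt_lt_sqrt (by norm_num) (by norm_num)
  have h7' : (188/81 : ℝ) < Real.sqrt 7 := Real.lt_sqrt_of_sq_lt (by norm_num)
  have hδ64 : (64/81 : ℝ) < δ := by linarith
  have hδpos : (0:ℝ) < δ := by linarith
  have hδ1 : δ ≤ 1 := le_trans (hKl 0) (hKu 0)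
  have hs89 : (8/9 : ℝ) < Real.sqrt δ := Real.lt_sqrt_of_sq_lt (by norm_num; linarith)
  have hspos : (0:ℝ) < Real.sqrt δ := by linarith
  have hs2 : Real.sqrt δ * Real.sqrt δ = δ := Real.mul_self_sqrt hδpos.le
  have hs17 : (1 + Real.sqrt 7)/4 < Real.sqrt δ := by
    apply Real.lt_sqrt_of_sq_lt
    have : Real.sqrt 7 * Real.sqrt 7 = 7 := Real.mul_self_sqrt (by norm_num)
    nlinarith
  have h7nn : (0:ℝ) ≤ Real.sqrt 7 := Real.sqrt_nonneg 7
  -- θ t ≤ t for t ≥ 0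
  have hdiff : Differentiable ℝ θ := fun t => (hθ t).differentiableAt
  have hub : θ ℓ ≤ ℓ := by
    have hanti : Antitone (fun t => θ t - t) := by
      apply antitone_of_deriv_nonpos (by fun_prop)
      intro x
      have hd : HasDerivAt (fun t => θ t - t)
          ((Real.cos (θ x) ^ 2 + K x * Real.sin (θ x) ^ 2) - 1) x :=
        (hθ x).sub (hasDerivAt_id x)
      rw [hd.deriv]
      have h1 := Real.sin_sq_add_cos_sq (θ x)
      nlinarith [sq_nonneg (Real.sin (θ x)), hKu x]
    have hℓ0 : (0:ℝ) ≤ ℓ := by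
      have : 2 * π / Real.sqrt δ < 2 * π * (9/8) := by
        rw [div_lt_iff₀ hspos]
        nlinarith [Real.pi_pos]
      nlinarith [Real.pi_pos]
    have := hanti hℓ0
    simp only [hθ0] at this
    linarith
  have hlb : δ * ℓ ≤ θ ℓ := by
    have hmono : Monotone (fun t => θ t - δ * t) := by
      apply monotone_of_deriv_nonneg (by fun_prop)
      intro x
      have hd : HasDerivAt (fun t => θ t - δ * t)
          ((Real.cos (θ x) ^ 2 + K x * Real.sin (θ x) ^ 2) - δ) x := by
        have h := (hθ x).sub ((hasDerivAt_id' x).const_mul δ); rw [mul_one] at h; exact h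
      rw [hd.deriv]
      have h1 := Real.sin_sq_add_cos_sq (θ x)
      nlinarith [sq_nonneg (Real.sin (θ x)), sq_nonneg (Real.cos (θ x)), hKl x]
    have hℓ0 : (0:ℝ) ≤ ℓ := by
      have : 2 * π / Real.sqrt δ < 2 * π * (9/8) := by
        rw [div_lt_iff₀ hspos]
        nlinarith [Real.pi_pos]
      nlinarith [Real.pi_pos]
    have := hmono hℓ0
    simp only [hθ0] at this
    linarith
  have hpi := Real.pi_pos
  -- upper bound
  have hup : θ ℓ < 5 * π / 2 := by
    have h1 : 4 * π / Real.sqrt δ < 9 * π / 2 := by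
      rw [div_lt_iff₀ hspos]
      nlinarith
    linarith
  -- lower bound
  have hlow : 3 * π / 2 < θ ℓ := by
    have hdiv : δ * (2 * π / Real.sqrt δ) = 2 * π * Real.sqrt δ := by
      rw [mul_comm δ, div_mul_eq_mul_div, mul_div_assoc, Real.div_sqrt]
    have h1 : δ * (4 * π - 2 * π / Real.sqrt δ) ≤ δ * ℓ :=
      mul_le_mul_of_nonneg_left hℓ1 hδpos.le
    have h2 : 3 * π / 2 < δ * (4 * π - 2 * π / Real.sqrt δ) := by
      rw [mul_sub, hdiv]
      -- need 3π/2 < 4πδ - 2π√δ, i.e. 8δ - 4√δ - 3 > 0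
      have hkey : (8:ℝ) * δ - 4 * Real.sqrt δ - 3 > 0 := by
        have h41 : Real.sqrt 7 < 4 * Real.sqrt δ - 1 := by linarith
        have hsq := mul_self_lt_mul_self h7nn h41
        rw [Real.mul_self_sqrt (by norm_num : (0:ℝ) ≤ 7)] at hsq
        nlinarith [hs2]
      nlinarith [mul_pos hpi hkey]
    linarith
  refine ⟨hlow, hup, ?_⟩
  rw [← Real.cos_sub_two_pi]
  exact Real.cos_pos_of_mem_Ioo ⟨by linarith, by linarith⟩
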